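/- Let g = 1 + ∑_{|α|≥1} b_α Z_α with inverse g^{-1} = 1 + ∑_{|α|≥1} a_α Z_α where a_α ≤ 0 for all |α| ≥ 1 and a_{g_i} < 0 for all i (a regular domain). Then the coefficients satisfy the supermultiplicativity inequality b_α b_β ≤ b_{αβ} for all words α, β ∈ F_n^+. -/

import Mathlib

noncomputable section

/-- Words over the alphabet `Fin n`: elements of the free monoid `F_n^+`. -/
abbrev Word (n : ℕ) := List (Fin n)

/-- let `g = 1 + ∑ b_α Z_α` (with `b_{g₀}=1`, `b_α > 0`) have inverse
`g⁻¹ = 1 + ∑ a_α Z_α` with `a_α ≤ 0` for all `|α| ≥ 1` and `a_{g_i} < 0` for all `i` (a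
regular domain).  Then `b_α b_β ≤ b_{αβ}` for all words `α, β`. -/
theorem stmt9 {n : ℕ} (a b : Word n → ℝ) (hbpos : ∀ α, 0 < b α) (hb0 : b [] = 1)
    (ha0 : a [] = 1)
    (hinv : ∀ γ : Word n, γ ≠ [] →
      b γ + ∑ k ∈ Finset.Icc 1 γ.length, a (γ.take k) * b (γ.drop k) = 0)
    (haneg : ∀ α : Word n, α ≠ [] → a α ≤ 0)
    (hagen : ∀ i : Fin n, a [i] < 0) :
    ∀ α β : Word n, b α * b β ≤ b (α ++ β) := by

  -- rewrite the recursion in a more usable form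
  have hrec : ∀ γ : Word n, γ ≠ [] →
      b γ = ∑ k ∈ Finset.Icc 1 γ.length, (-a (γ.take k)) * b (γ.drop k) := by
    intro γ hγ
    have := hinv γ hγ
    have : b γ = -∑ k ∈ Finset.Icc 1 γ.length, a (γ.take k) * b (γ.drop k) := by linarith
    rw [this, ← Finset.sum_neg_distrib]
    exact Finset.sum_congr rfl (fun k _ => by ring)
  suffices H : ∀ m (α β : Word n), α.length ≤ m → b α * b β ≤ b (α ++ β) by
    exact fun α β => H α.length α β le_rfl
  intro m
  induction m with
  | zero =>
    intro α β hlen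
    have hα : α = [] := List.eq_nil_of_length_eq_zero (Nat.le_zero.mp hlen)
    subst hα; simp [hb0]
  | succ m ih =>
    intro α β hlen
    rcases eq_or_ne α [] with hα | hα
    · subst hα; simp [hb0]
    have hαlen : 1 ≤ α.length := List.length_pos_iff.mpr hα
    have hne : α ++ β ≠ [] := by simp [hα]
    rw [hrec (α ++ β) hne, hrec α hα, Finset.sum_mul]
    have hsub : Finset.Icc 1 α.length ⊆ Finset.Icc 1 (α ++ β).length := by
      apply Finset.Icc_subset_Icc le_rfl
      simp [List.length_append]
    calc ∑ k ∈ Finset.Icc 1 α.length, (-a (α.take k)) * b (α.drop k) * b β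
        ≤ ∑ k ∈ Finset.Icc 1 α.length, (-a ((α ++ β).take k)) * b ((α ++ β).drop k) := by
          apply Finset.sum_le_sum
          intro k hk
          rw [Finset.mem_Icc] at hk
          rw [List.take_append_of_le_length hk.2, List.drop_append_of_le_length hk.2]
          have htne : α.take k ≠ [] := by
            intro h
            have := congrArg List.length h
            rw [List.length_take, List.length_nil] at this
            omega
          have hna : 0 ≤ -a (α.take k) := by linarith [haneg _ htne]
          have hib : b (α.drop k) * b β ≤ b (α.drop k ++ β) := by
            apply ih
            rw [List.length_drop]
            omega
          calc (-a (α.take k)) * b (α.drop k) * b β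
              = (-a (α.take k)) * (b (α.drop k) * b β) := by ring
            _ ≤ (-a (α.take k)) * b (α.drop k ++ β) := by
                exact mul_le_mul_of_nonneg_left hib hna
      _ ≤ ∑ k ∈ Finset.Icc 1 (α ++ β).length, (-a ((α ++ β).take k)) * b ((α ++ β).drop k) := by
          apply Finset.sum_le_sum_of_subset_of_nonneg hsub
          intro k hk _
          rw [Finset.mem_Icc] at hk
          have htne : (α ++ β).take k ≠ [] := by
            intro h
            have := congrArg List.length h
            rw [List.length_take, List.length_nil] at this
            omega
          have := haneg _ htne
          have := (hbpos ((α ++ β).drop k)).le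
          nlinarith
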